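/- arXiv:1201.1546 — 3 statements merged into one kernel-verified Lean document; each statement's English description precedes it below -/
import Mathlib

section
/- Let M ∈ S_d^+ and let v_1,…,v_k ∈ ℝ^d be linearly independent vectors such that v_iᵀ M v_j ≥ 0 for all 1 ≤ i ≤ j ≤ k. Let Ξ := {α = (α_1,…,α_k) ∈ ℝ_+^k : α_1 + ⋯ + α_k = 1}, let δ_1,…,δ_k ∈ ℝ, and let δ := min_{α ∈ Ξ} (‖Σ_{i=1}^k α_i v_i‖_M + Σ_{i=1}^k α_i δ_i). Then this minimum is attained at a unique α ∈ Ξ; and if this minimizer α has all coefficients positive, then δ > δ_i for each 1 ≤ i ≤ k (the causality property). -/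
open Matrix
open scoped BigOperators ENNReal Classical

noncomputable section

/-- Euclidean norm of a vector of `ℝ^d`. -/
def euclNorm {d : ℕ} (u : Fin d → ℝ) : ℝ := Real.sqrt (u ⬝ᵥ u)

/-- The norm `‖u‖_M := √(uᵀ M u)` associated to a matrix `M`. -/
def normM {d : ℕ} (M : Matrix (Fin d) (Fin d) ℝ) (u : Fin d → ℝ) : ℝ :=
  Real.sqrt (u ⬝ᵥ M.mulVec u)

/-- Operator norm of a matrix, with respect to the euclidean norm. -/
def opNorm {d : ℕ} (M : Matrix (Fin d) (Fin d) ℝ) : ℝ :=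
  sSup {r : ℝ | ∃ u : Fin d → ℝ, euclNorm u = 1 ∧ r = euclNorm (M.mulVec u)}

/-- Anisotropy ratio `κ(M) := max ‖u‖_M/‖v‖_M` over euclidean-unit vectors `u, v`. -/
def kappa {d : ℕ} (M : Matrix (Fin d) (Fin d) ℝ) : ℝ :=
  sSup {r : ℝ | ∃ u v : Fin d → ℝ,
    euclNorm u = 1 ∧ euclNorm v = 1 ∧ r = normM M u / normM M v}

/-- `z` has integer coordinates, i.e. `z ∈ ℤ^d`. -/
def IsIntVec {d : ℕ} (z : Fin d → ℝ) : Prop := ∀ i, ∃ m : ℤ, z i = (m : ℝ)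

/-- `z` belongs to the sub-lattice `u_0 ℤ + ⋯ + u_{k-1} ℤ` generated by the
first `k` vectors of the family `u`. -/
def InLatticeSpan {d : ℕ} (u : Fin d → Fin d → ℝ) (k : ℕ) (z : Fin d → ℝ) : Prop :=
  ∃ c : Fin d → ℤ, (∀ i : Fin d, ¬ ((i : ℕ) < k) → c i = 0) ∧ z = ∑ i, (c i : ℝ) • u i

/-- `u` is an `M`-reduced basis of `ℤ^d`: a basis of the lattice `ℤ^d`
(integer entries, determinant `±1`) such that each `u k` minimizes `‖·‖_M`
among integer vectors outside the sub-lattice spanned by `u 0, …, u (k-1)`. -/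
def IsReducedBasis {d : ℕ} (M : Matrix (Fin d) (Fin d) ℝ) (u : Fin d → Fin d → ℝ) : Prop :=
  (∀ i, IsIntVec (u i)) ∧ |(Matrix.of u).det| = 1 ∧
  ∀ k : Fin d, ∀ z : Fin d → ℝ, IsIntVec z → ¬ InLatticeSpan u (k : ℕ) z →
    normM M (u k) ≤ normM M z

/-- A simplex of `ℝ^d`, described by its vertex set: `d+1` affinely independent points. -/
def IsSimplex (d : ℕ) (V : Finset (Fin d → ℝ)) : Prop :=
  V.card = d + 1 ∧ AffineIndependent ℝ (fun v : V => (v : Fin d → ℝ))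

/-- A (conforming) mesh: a finite collection of simplices such that the intersection
of any two of them is the convex hull of their common vertices. -/
def IsMesh (d : ℕ) (𝒯 : Finset (Finset (Fin d → ℝ))) : Prop :=
  (∀ V ∈ 𝒯, IsSimplex d V) ∧
  ∀ S ∈ 𝒯, ∀ T ∈ 𝒯,
    (convexHull ℝ (S : Set (Fin d → ℝ))) ∩ (convexHull ℝ (T : Set (Fin d → ℝ)))
      = convexHull ℝ ((S ∩ T : Finset (Fin d → ℝ)) : Set (Fin d → ℝ))

/-- An `M`-reduced mesh. -/
def IsReducedMesh {d : ℕ} (M : Matrix (Fin d) (Fin d) ℝ)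
    (𝒯 : Finset (Finset (Fin d → ℝ))) : Prop :=
  IsMesh d 𝒯 ∧
  (⋃ V ∈ 𝒯, convexHull ℝ (V : Set (Fin d → ℝ))) ∈ nhds (0 : Fin d → ℝ) ∧
  (∀ V ∈ 𝒯, ∀ v ∈ V, IsIntVec v) ∧
  (∀ V ∈ 𝒯, MeasureTheory.volume (convexHull ℝ (V : Set (Fin d → ℝ)))
      = ENNReal.ofReal (1 / (Nat.factorial d))) ∧
  (∀ V ∈ 𝒯, (0 : Fin d → ℝ) ∈ V) ∧
  (∀ V ∈ 𝒯, ∀ v ∈ V, ∀ w ∈ V, v ≠ 0 → w ≠ 0 → 0 ≤ v ⬝ᵥ M.mulVec w)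

/-- `z` is a vertex of the mesh `𝒯`. -/
def IsMeshVertex {d : ℕ} (𝒯 : Finset (Finset (Fin d → ℝ))) (z : Fin d → ℝ) : Prop :=
  ∃ V ∈ 𝒯, z ∈ V

/-- The multiplicative distance `d_×(M,N) := sup_{u ≠ 0} |ln ‖u‖_M − ln ‖u‖_N|`. -/
def dTimes {d : ℕ} (M N : Matrix (Fin d) (Fin d) ℝ) : ℝ :=
  sSup {r : ℝ | ∃ u : Fin d → ℝ, u ≠ 0 ∧ r = |Real.log (normM M u) - Real.log (normM N u)|}

/-- The periodic unit box `Ω = (ℝ/ℤ)^d`. -/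
abbrev Torus (d : ℕ) : Type := Fin d → AddCircle (1 : ℝ)

/-- Canonical projection `ℝ^d → (ℝ/ℤ)^d`. -/
def toTorus {d : ℕ} (x : Fin d → ℝ) : Torus d := fun i => (x i : AddCircle (1 : ℝ))

/-- The grid `Ω_n = {0, 1/n, …, (n-1)/n}^d ⊂ Ω`. -/
def IsGridPoint {d : ℕ} (n : ℕ) (z : Torus d) : Prop :=
  ∃ k : Fin d → ℤ, ∀ i, z i = (((k i : ℝ) / (n : ℝ) : ℝ) : AddCircle (1 : ℝ))

/-- The quotient (periodic) distance on the torus. -/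
def dPer {d : ℕ} (z x : Torus d) : ℝ :=
  sInf {r : ℝ | ∃ Z X : Fin d → ℝ, toTorus Z = z ∧ toTorus X = x ∧ r = euclNorm (Z - X)}

/-- The Hopf–Lax update operator associated to the matrix `M`, the stencil (mesh) `𝒯`,
and the grid scale `1/n`: minimum over simplices `T ∈ 𝒯`, and over barycentric
coefficients `α ≥ 0` supported on the nonzero vertices of `T` with total mass 1, of
`‖∑ α_v v/n‖_M + ∑ α_v u(z + v/n)` (with the convention `0·∞ = 0`). -/
def hopfLax {d : ℕ} (M : Matrix (Fin d) (Fin d) ℝ) (𝒯 : Finset (Finset (Fin d → ℝ)))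
    (n : ℕ) (u : Torus d → ℝ≥0∞) (z : Torus d) : ℝ≥0∞ :=
  ⨅ (T : Finset (Fin d → ℝ)) (_ : T ∈ 𝒯) (α : (Fin d → ℝ) → ℝ)
    (_ : ∀ w, 0 ≤ α w) (_ : α 0 = 0) (_ : ∑ w ∈ T, α w = 1),
    ENNReal.ofReal (normM M ((n : ℝ)⁻¹ • ∑ w ∈ T, α w • w)) +
      ∑ w ∈ T, ENNReal.ofReal (α w) * u (z + toTorus ((n : ℝ)⁻¹ • w))

/-- `u` solves the discrete fixed point system: `u(0) = 0` and
`u(z) = Λ_n(u,z)` at every other grid point `z`. -/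
def SolvesDiscrete {d : ℕ} (𝓜 : Torus d → Matrix (Fin d) (Fin d) ℝ)
    (𝒯 : Torus d → Finset (Finset (Fin d → ℝ))) (n : ℕ) (u : Torus d → ℝ≥0∞) : Prop :=
  u 0 = 0 ∧ ∀ z : Torus d, IsGridPoint n z → z ≠ 0 → u z = hopfLax (𝓜 z) (𝒯 z) n u z


section Helpers

variable {d : ℕ} {M : Matrix (Fin d) (Fin d) ℝ}

lemma bil_symm (hM : M.PosDef) (x y : Fin d → ℝ) :
    x ⬝ᵥ M.mulVec y = y ⬝ᵥ M.mulVec x := by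
  rw [dotProduct_mulVec, ← Matrix.mulVec_transpose]
  have : Mᵀ = M := by
    have := hM.1
    simpa [Matrix.IsHermitian] using this
  rw [this, dotProduct_comm]

lemma Q_pos (hM : M.PosDef) {x : Fin d → ℝ} (hx : x ≠ 0) : 0 < x ⬝ᵥ M.mulVec x := by
  simpa using hM.dotProduct_mulVec_pos hx

lemma Q_nonneg (hM : M.PosDef) (x : Fin d → ℝ) : 0 ≤ x ⬝ᵥ M.mulVec x := by
  rcases eq_or_ne x 0 with h | h
  · simp [h]
  · exact (Q_pos hM h).le

lemma Q_zero (hM : M.PosDef) {x : Fin d → ℝ} (hx : x ⬝ᵥ M.mulVec x = 0) : x = 0 := by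
  by_contra h
  exact (Q_pos hM h).ne' hx

lemma bil_add_right (x y z : Fin d → ℝ) :
    x ⬝ᵥ M.mulVec (y + z) = x ⬝ᵥ M.mulVec y + x ⬝ᵥ M.mulVec z := by
  rw [Matrix.mulVec_add, dotProduct_add]

lemma bil_smul_left (c : ℝ) (x y : Fin d → ℝ) :
    (c • x) ⬝ᵥ M.mulVec y = c * (x ⬝ᵥ M.mulVec y) := smul_dotProduct _ _ _

lemma bil_smul_right (c : ℝ) (x y : Fin d → ℝ) :
    x ⬝ᵥ M.mulVec (c • y) = c * (x ⬝ᵥ M.mulVec y) := by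
  rw [Matrix.mulVec_smul, dotProduct_smul]; rfl

lemma bil_sub_sub (hM : M.PosDef) (x y : Fin d → ℝ) (a b : ℝ) :
    (a • x - b • y) ⬝ᵥ M.mulVec (a • x - b • y)
      = a ^ 2 * (x ⬝ᵥ M.mulVec x) - 2 * a * b * (x ⬝ᵥ M.mulVec y)
        + b ^ 2 * (y ⬝ᵥ M.mulVec y) := by
  have h := bil_symm hM x y
  simp only [sub_eq_add_neg, ← neg_smul, bil_add_right, add_dotProduct,
    bil_smul_left, bil_smul_right]
  linear_combination (a*b) * h

lemma normM_nonneg (u : Fin d → ℝ) : 0 ≤ normM M u := Real.sqrt_nonneg _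

lemma normM_sq (hM : M.PosDef) (u : Fin d → ℝ) :
    normM M u ^ 2 = u ⬝ᵥ M.mulVec u := Real.sq_sqrt (Q_nonneg hM u)

lemma normM_pos (hM : M.PosDef) {u : Fin d → ℝ} (hu : u ≠ 0) : 0 < normM M u :=
  Real.sqrt_pos.mpr (Q_pos hM hu)

lemma normM_smul (hM : M.PosDef) (c : ℝ) (u : Fin d → ℝ) :
    normM M (c • u) = |c| * normM M u := by
  have : (c • u) ⬝ᵥ M.mulVec (c • u) = c ^ 2 * (u ⬝ᵥ M.mulVec u) := by
    rw [bil_smul_left, bil_smul_right]; ring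
  rw [normM, this, Real.sqrt_mul (sq_nonneg c), Real.sqrt_sq_eq_abs, normM]

lemma cauchy (hM : M.PosDef) (x y : Fin d → ℝ) :
    x ⬝ᵥ M.mulVec y ≤ normM M x * normM M y := by
  rcases eq_or_ne y 0 with h | h
  · rw [h]
    simp only [Matrix.mulVec_zero, dotProduct_zero]
    exact mul_nonneg (normM_nonneg x) (normM_nonneg _)
  · set Qy := y ⬝ᵥ M.mulVec y with hQy
    set Qx := x ⬝ᵥ M.mulVec x with hQx
    set s := x ⬝ᵥ M.mulVec y with hs
    have hQyp : 0 < Qy := Q_pos hM h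
    have hz : 0 ≤ (Qy • x - s • y) ⬝ᵥ M.mulVec (Qy • x - s • y) := Q_nonneg hM _
    rw [bil_sub_sub hM] at hz
    have key : s ^ 2 ≤ Qx * Qy := by nlinarith
    have h1 : s ≤ |s| := le_abs_self s
    have h2 : |s| = Real.sqrt (s ^ 2) := (Real.sqrt_sq_eq_abs s).symm
    calc s ≤ Real.sqrt (s ^ 2) := h2 ▸ h1
      _ ≤ Real.sqrt (Qx * Qy) := Real.sqrt_le_sqrt key
      _ = normM M x * normM M y := by
          rw [Real.sqrt_mul (Q_nonneg hM x)]; rfl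

lemma cauchy_eq (hM : M.PosDef) {x y : Fin d → ℝ}
    (h : x ⬝ᵥ M.mulVec y = normM M x * normM M y) :
    (normM M y) • x = (normM M x) • y := by
  have hz : ((normM M y) • x - (normM M x) • y) ⬝ᵥ
      M.mulVec ((normM M y) • x - (normM M x) • y) = 0 := by
    rw [bil_sub_sub hM, ← normM_sq hM x, ← normM_sq hM y, h]; ring
  exact sub_eq_zero.mp (Q_zero hM hz)

lemma triangle (hM : M.PosDef) (x y : Fin d → ℝ) :
    normM M (x + y) ≤ normM M x + normM M y := by
  have h1 : (x + y) ⬝ᵥ M.mulVec (x + y)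
      = x ⬝ᵥ M.mulVec x + 2 * (x ⬝ᵥ M.mulVec y) + y ⬝ᵥ M.mulVec y := by
    rw [bil_add_right, add_dotProduct, add_dotProduct, bil_symm hM y x]; ring
  have h2 : (x + y) ⬝ᵥ M.mulVec (x + y) ≤ (normM M x + normM M y) ^ 2 := by
    have := cauchy hM x y
    have ex := normM_sq hM x
    have ey := normM_sq hM y
    nlinarith
  have := Real.sqrt_le_sqrt h2
  rwa [Real.sqrt_sq (add_nonneg (normM_nonneg x) (normM_nonneg y))] at this

lemma sum_smul_div {k : ℕ} (c : Fin k → ℝ) (r : ℝ) (v : Fin k → Fin d → ℝ) :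
    ∑ j, (c j / r) • v j = r⁻¹ • ∑ j, c j • v j := by
  rw [Finset.smul_sum]
  refine Finset.sum_congr rfl fun j _ => ?_
  rw [smul_smul, div_eq_inv_mul]

lemma bil_sum_right {k : ℕ} (x : Fin d → ℝ) (v : Fin k → Fin d → ℝ) (c : Fin k → ℝ) :
    x ⬝ᵥ M.mulVec (∑ j, c j • v j) = ∑ j, c j * (x ⬝ᵥ M.mulVec (v j)) := by
  rw [show M.mulVec (∑ j, c j • v j) = ∑ j, c j • M.mulVec (v j) by
    simp only [← Matrix.mulVecLin_apply, map_sum, _root_.map_smul]]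
  rw [dotProduct]
  simp only [Finset.sum_apply, Pi.smul_apply, smul_eq_mul, Finset.mul_sum, dotProduct,
    Finset.sum_mul]
  rw [Finset.sum_comm]
  congr 1; ext j; congr 1; ext i; ring

end Helpers

/-- Lemma `lem:Sethian`, first part (causality): the Hopf–Lax minimization over the
simplex `Ξ` has a unique minimizer, and if the minimizer has positive coefficients then
the minimal value `δ` satisfies `δ > δ_i` for every `i`. -/
theorem stmt10 {d k : ℕ} (hk : 1 ≤ k)
    (M : Matrix (Fin d) (Fin d) ℝ) (hM : M.PosDef)
    (v : Fin k → Fin d → ℝ) (hind : LinearIndependent ℝ v)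
    (hacute : ∀ i j : Fin k, 0 ≤ v i ⬝ᵥ M.mulVec (v j))
    (δ : Fin k → ℝ) :
    (∃! α : Fin k → ℝ, ((∀ i, 0 ≤ α i) ∧ ∑ i, α i = 1) ∧
      ∀ β : Fin k → ℝ, ((∀ i, 0 ≤ β i) ∧ ∑ i, β i = 1) →
        normM M (∑ i, α i • v i) + ∑ i, α i * δ i
          ≤ normM M (∑ i, β i • v i) + ∑ i, β i * δ i) ∧
    (∀ α : Fin k → ℝ, ((∀ i, 0 ≤ α i) ∧ ∑ i, α i = 1) →
      (∀ β : Fin k → ℝ, ((∀ i, 0 ≤ β i) ∧ ∑ i, β i = 1) →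
        normM M (∑ i, α i • v i) + ∑ i, α i * δ i
          ≤ normM M (∑ i, β i • v i) + ∑ i, β i * δ i) →
      (∀ i, 0 < α i) →
      ∀ i, δ i < normM M (∑ j, α j • v j) + ∑ j, α j * δ j) := by
  classical
  have hvz : ∀ c : Fin k → ℝ, ∑ i, c i • v i = 0 → ∀ i, c i = 0 := fun c hc =>
    Fintype.linearIndependent_iff.mp hind c hc
  have hΦne : ∀ α : Fin k → ℝ, (∑ i, α i = 1) → (∑ i, α i • v i) ≠ 0 := by
    intro α hs h
    have h0 := hvz α h
    rw [Finset.sum_congr rfl fun i _ => h0 i] at hs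
    simp at hs
  constructor
  · -- existence and uniqueness
    have hcont : Continuous (fun α : Fin k → ℝ =>
        normM M (∑ i, α i • v i) + ∑ i, α i * δ i) := by
      have h1 : Continuous (fun α : Fin k → ℝ => ∑ i, α i • v i) :=
        continuous_finset_sum _ fun i _ => ((continuous_apply i).smul continuous_const)
      have h2 : Continuous (fun u : Fin d → ℝ => u ⬝ᵥ M.mulVec u) := by
        simp only [dotProduct, Matrix.mulVec]
        exact continuous_finset_sum _ fun i _ => (continuous_apply i).mul
          (continuous_finset_sum _ fun j _ => (continuous_const.mul (continuous_apply j)))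
      have h3 : Continuous (fun α : Fin k → ℝ => ∑ i, α i * δ i) :=
        continuous_finset_sum _ fun i _ => ((continuous_apply i).mul continuous_const)
      exact (Real.continuous_sqrt.comp (h2.comp h1)).add h3
    have hne : (stdSimplex ℝ (Fin k)).Nonempty := by
      refine ⟨fun j => if j = ⟨0, hk⟩ then 1 else 0, fun j => ?_, ?_⟩
      · dsimp only; split <;> norm_num
      · simp
    obtain ⟨α, hαS, hαmin⟩ :=
      isCompact_stdSimplex ℝ (Fin k) |>.exists_isMinOn hne hcont.continuousOn
    have hmin : ∀ β : Fin k → ℝ, ((∀ i, 0 ≤ β i) ∧ ∑ i, β i = 1) →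
        normM M (∑ i, α i • v i) + ∑ i, α i * δ i
          ≤ normM M (∑ i, β i • v i) + ∑ i, β i * δ i := fun β hβ =>
      hαmin hβ
    refine ⟨α, ⟨hαS, hmin⟩, ?_⟩
    rintro β ⟨hβS, hβmin⟩
    -- β and α are both minimizers
    have heq : normM M (∑ i, β i • v i) + ∑ i, β i * δ i
        = normM M (∑ i, α i • v i) + ∑ i, α i * δ i :=
      le_antisymm (hβmin α hαS) (hmin β hβS)
    set x := ∑ i, β i • v i with hx
    set y := ∑ i, α i • v i with hy
    have hxne : x ≠ 0 := hΦne β hβS.2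
    have hyne : y ≠ 0 := hΦne α hαS.2
    -- midpoint
    set γ : Fin k → ℝ := fun j => (β j + α j) / 2 with hγ
    have hγS : (∀ i, 0 ≤ γ i) ∧ ∑ i, γ i = 1 := by
      constructor
      · intro j
        have := hβS.1 j; have := hαS.1 j
        simp only [hγ]; positivity
      · simp only [hγ, ← Finset.sum_div, Finset.sum_add_distrib, hβS.2, hαS.2]
        norm_num
    have hΦγ : ∑ j, γ j • v j = (2:ℝ)⁻¹ • (x + y) := by
      simp only [hγ]
      rw [sum_smul_div, Finset.sum_congr rfl fun j _ => add_smul (β j) (α j) (v j),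
        Finset.sum_add_distrib]
    have hγδ : ∑ j, γ j * δ j = ((∑ j, β j * δ j) + ∑ j, α j * δ j) / 2 := by
      simp only [hγ, div_mul_eq_mul_div, ← Finset.sum_div, add_mul, Finset.sum_add_distrib]
    have hle := hmin γ hγS
    rw [hΦγ, hγδ, normM_smul hM] at hle
    have htri := triangle hM x y
    have h2 : |((2:ℝ)⁻¹)| = (2:ℝ)⁻¹ := by norm_num
    rw [h2] at hle
    have hnormeq : normM M (x + y) = normM M x + normM M y := by
      apply le_antisymm htri
      linarith
    -- equality in Cauchy-Schwarz
    have hcs : x ⬝ᵥ M.mulVec y = normM M x * normM M y := by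
      have e1 : (x + y) ⬝ᵥ M.mulVec (x + y)
          = x ⬝ᵥ M.mulVec x + 2 * (x ⬝ᵥ M.mulVec y) + y ⬝ᵥ M.mulVec y := by
        rw [bil_add_right, add_dotProduct, add_dotProduct, bil_symm hM y x]; ring
      have e2 := normM_sq hM (x + y)
      have e3 := normM_sq hM x
      have e4 := normM_sq hM y
      rw [hnormeq] at e2
      nlinarith
    have hcol := cauchy_eq hM hcs
    -- so normM M y • x = normM M x • y, transfer to coefficients
    have hco : ∀ j, normM M y * β j = normM M x * α j := by
      have : ∑ j, (normM M y * β j - normM M x * α j) • v j = 0 := by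
        simp only [sub_smul, Finset.sum_sub_distrib, mul_smul, ← Finset.smul_sum]
        rw [← hx, ← hy, hcol, sub_self]
      intro j
      have := hvz _ this j
      linarith
    have hxy : normM M y = normM M x := by
      have h1 : ∑ j, normM M y * β j = ∑ j, normM M x * α j :=
        Finset.sum_congr rfl fun j _ => hco j
      rwa [← Finset.mul_sum, ← Finset.mul_sum, hβS.2, hαS.2, mul_one, mul_one] at h1
    have hypos : 0 < normM M y := normM_pos hM hyne
    funext j
    have := hco j
    rw [← hxy] at this
    exact mul_left_cancel₀ hypos.ne' this
  · -- causality
    rintro α ⟨hα0, hα1⟩ hmin hpos i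
    set w := ∑ j, α j • v j with hw
    have hwne : w ≠ 0 := hΦne α hα1
    have hn : 0 < normM M w := normM_pos hM hwne
    have hqi : 0 < v i ⬝ᵥ M.mulVec (v i) := Q_pos hM (hind.ne_zero i)
    set q := v i ⬝ᵥ M.mulVec (v i) with hq
    set s := v i ⬝ᵥ M.mulVec w with hsdef
    have hs : 0 < s := by
      rw [hsdef, hw, bil_sum_right]
      have hterm : ∀ j ∈ Finset.univ, 0 ≤ α j * (v i ⬝ᵥ M.mulVec (v j)) :=
        fun j _ => mul_nonneg (hα0 j) (hacute i j)
      have hsingle : α i * (v i ⬝ᵥ M.mulVec (v i))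
          ≤ ∑ j, α j * (v i ⬝ᵥ M.mulVec (v j)) :=
        Finset.single_le_sum hterm (Finset.mem_univ i)
      have : 0 < α i * (v i ⬝ᵥ M.mulVec (v i)) := mul_pos (hpos i) hqi
      linarith
    set t := min (α i) (min (1/2 : ℝ) (s / q)) with htdef
    have ht0 : 0 < t := lt_min (hpos i) (lt_min one_half_pos (div_pos hs hqi))
    have ht1 : t ≤ 1/2 := le_trans (min_le_right _ _) (min_le_left _ _)
    have htα : t ≤ α i := min_le_left _ _
    have hts : t * q ≤ s := by
      have : t ≤ s / q := le_trans (min_le_right _ _) (min_le_right _ _)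
      exact (le_div_iff₀ hqi).mp this
    have h1t : 0 < 1 - t := by linarith
    set β : Fin k → ℝ := fun j => (α j - if j = i then t else 0) / (1 - t) with hβ
    have hβS : (∀ j, 0 ≤ β j) ∧ ∑ j, β j = 1 := by
      constructor
      · intro j
        by_cases hj : j = i
        · show 0 ≤ (α j - if j = i then t else 0) / (1 - t)
          rw [if_pos hj]
          exact div_nonneg (by rw [hj]; linarith) h1t.le
        · simp only [hβ, if_neg hj, sub_zero]
          exact div_nonneg (hα0 j) h1t.le
      · simp only [hβ, ← Finset.sum_div, Finset.sum_sub_distrib, hα1,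
          Finset.sum_ite_eq', Finset.mem_univ, if_true]
        exact div_self h1t.ne'
    have hΦβ : ∑ j, β j • v j = (1 - t)⁻¹ • (w - t • v i) := by
      simp only [hβ]
      rw [sum_smul_div]
      congr 1
      simp only [sub_smul, Finset.sum_sub_distrib, ← hw]
      congr 1
      simp [ite_smul]
    have hβδ : ∑ j, β j * δ j = ((∑ j, α j * δ j) - t * δ i) / (1 - t) := by
      simp only [hβ, div_mul_eq_mul_div, ← Finset.sum_div, sub_mul, ite_mul, zero_mul,
        Finset.sum_sub_distrib, Finset.sum_ite_eq', Finset.mem_univ, if_true]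
    have hle := hmin β hβS
    rw [hΦβ, hβδ, normM_smul hM, abs_of_pos (inv_pos.mpr h1t)] at hle
    by_contra hcon
    push_neg at hcon
    -- hcon : normM M w + ∑ α δ ≤ δ i
    set A := normM M (w - t • v i) with hA
    set B := ∑ j, α j * δ j with hB
    -- hle : normM M w + B ≤ (1-t)⁻¹ * A + (B - t * δ i) / (1-t)
    have hmul : (normM M w + B) * (1 - t) ≤ A + (B - t * δ i) := by
      have : (1 - t)⁻¹ * A + (B - t * δ i) / (1 - t) = (A + (B - t * δ i)) / (1 - t) := by
        field_simp
      rw [this] at hle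
      exact (le_div_iff₀ h1t).mp hle
    have key : normM M w ≤ A := by
      nlinarith [mul_nonneg ht0.le (sub_nonneg.mpr hcon)]
    have hsq : A ^ 2 = w ⬝ᵥ M.mulVec w - 2 * t * s + t ^ 2 * q := by
      rw [hA, normM_sq hM]
      have := bil_sub_sub hM w (v i) 1 t
      simp only [one_smul, one_pow, one_mul] at this
      rw [this, bil_symm hM w (v i), ← hsdef, ← hq]
      ring
    have hkey2 : normM M w ^ 2 ≤ A ^ 2 :=
      pow_le_pow_left₀ (normM_nonneg w) key 2
    rw [normM_sq hM, hsq] at hkey2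
    nlinarith [mul_pos ht0 hs, mul_le_mul_of_nonneg_left hts ht0.le]


end
end

section
/- Let M ∈ S_d^+ and let v_1,…,v_k ∈ ℝ^d be linearly independent vectors such that v_iᵀ M v_j ≥ 0 for all 1 ≤ i ≤ j ≤ k. Let Ξ := {α ∈ ℝ_+^k : α_1 + ⋯ + α_k = 1}, let Δ = (δ_1,…,δ_k) ∈ ℝ^k, let δ := min_{α ∈ Ξ} (‖Σ_i α_i v_i‖_M + Σ_i α_i δ_i), and suppose the (unique) minimizer α ∈ Ξ has all coefficients positive. Let M̂ be the k×k Gram matrix with entries M̂_{ij} = v_iᵀ M v_j and let 𝟙 := (1,…,1) ∈ ℝ^k. Then ‖δ𝟙 − Δ‖_{M̂⁻¹} = 1 and M̂ α = ‖α‖_{M̂} · (δ𝟙 − Δ), where ‖x‖_{M̂} := √(xᵀ M̂ x) and ‖x‖_{M̂⁻¹} := √(xᵀ M̂⁻¹ x). -/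
open Matrix
open scoped BigOperators ENNReal Classical

noncomputable section

/-- Auxiliary: `√(a² + b) ≤ a + b/(2a)` for `a > 0` and `a² + b ≥ 0`. -/
lemma sqrt_aux (a b : ℝ) (ha : 0 < a) (hab : 0 ≤ a ^ 2 + b) :
    Real.sqrt (a ^ 2 + b) ≤ a + b / (2 * a) := by
  have h2a : (0:ℝ) < 2 * a := by linarith
  have hge : -(a / 2) ≤ b / (2 * a) := by
    rw [le_div_iff₀ h2a]; nlinarith
  have h1 : 0 ≤ a + b / (2 * a) := by linarith
  have key : a ^ 2 + b ≤ (a + b / (2 * a)) ^ 2 := by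
    have hb : b / (2 * a) * (2 * a) = b := by field_simp
    nlinarith [sq_nonneg (b / (2 * a))]
  calc Real.sqrt (a ^ 2 + b) ≤ Real.sqrt ((a + b / (2 * a)) ^ 2) := Real.sqrt_le_sqrt key
    _ = a + b / (2 * a) := Real.sqrt_sq h1

/-- Lemma `lem:Sethian`, second part: the optimality relations satisfied by the
minimizer, in terms of the Gram matrix `M̂`. -/
theorem stmt11 {d k : ℕ} (hk : 1 ≤ k)
    (M : Matrix (Fin d) (Fin d) ℝ) (hM : M.PosDef)
    (v : Fin k → Fin d → ℝ) (hind : LinearIndependent ℝ v)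
    (hacute : ∀ i j : Fin k, 0 ≤ v i ⬝ᵥ M.mulVec (v j))
    (Δ : Fin k → ℝ) (α : Fin k → ℝ)
    (hα : (∀ i, 0 ≤ α i) ∧ ∑ i, α i = 1)
    (hmin : ∀ β : Fin k → ℝ, ((∀ i, 0 ≤ β i) ∧ ∑ i, β i = 1) →
      normM M (∑ i, α i • v i) + ∑ i, α i * Δ i
        ≤ normM M (∑ i, β i • v i) + ∑ i, β i * Δ i)
    (hpos : ∀ i, 0 < α i)
    (Mhat : Matrix (Fin k) (Fin k) ℝ)
    (hMhat : Mhat = Matrix.of fun i j => v i ⬝ᵥ M.mulVec (v j))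
    (δ : ℝ) (hδ : δ = normM M (∑ i, α i • v i) + ∑ i, α i * Δ i) :
    normM Mhat⁻¹ (fun i => δ - Δ i) = 1 ∧
    Mhat.mulVec α = normM Mhat α • (fun i => δ - Δ i) := by
  obtain ⟨hαnn, hαsum⟩ := hα
  -- symmetry of M
  have hsym : ∀ i j, M j i = M i j := by
    intro i j; simpa using hM.1.apply i j
  have hMsymm : ∀ a b : Fin d → ℝ, a ⬝ᵥ M.mulVec b = b ⬝ᵥ M.mulVec a := by
    intro a b
    simp only [dotProduct, Matrix.mulVec, Finset.mul_sum]
    rw [Finset.sum_comm]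
    refine Finset.sum_congr rfl fun j _ => Finset.sum_congr rfl fun i _ => ?_
    rw [hsym i j]; ring
  have hbil : ∀ (x : Fin k → ℝ) (b : Fin d → ℝ),
      (∑ i, x i • v i) ⬝ᵥ M.mulVec b = ∑ i, x i * (v i ⬝ᵥ M.mulVec b) := by
    intro x b
    simp only [dotProduct, Finset.sum_apply, Pi.smul_apply, smul_eq_mul,
      Finset.sum_mul, Finset.mul_sum, mul_assoc]
    rw [Finset.sum_comm]
  have hbil2 : ∀ (a : Fin d → ℝ) (y : Fin k → ℝ),
      a ⬝ᵥ M.mulVec (∑ j, y j • v j) = ∑ j, y j * (a ⬝ᵥ M.mulVec (v j)) := by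
    intro a y
    rw [hMsymm, hbil]
    exact Finset.sum_congr rfl fun j _ => by rw [hMsymm]
  set w : Fin d → ℝ := ∑ i, α i • v i with hw
  have hposdef : ∀ u : Fin d → ℝ, u ≠ 0 → 0 < u ⬝ᵥ M.mulVec u := by
    intro u hu; simpa using hM.dotProduct_mulVec_pos hu
  have hwne : w ≠ 0 := by
    intro h0
    have hz := (Fintype.linearIndependent_iff.mp hind) α (by rw [← hw]; exact h0) ⟨0, hk⟩
    exact absurd hz (ne_of_gt (hpos ⟨0, hk⟩))
  have hwMw : 0 < w ⬝ᵥ M.mulVec w := hposdef w hwne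
  have hnw : 0 < normM M w := Real.sqrt_pos.mpr hwMw
  have hnw2 : normM M w ^ 2 = w ⬝ᵥ M.mulVec w := Real.sq_sqrt hwMw.le
  set c : Fin k → ℝ := fun m => (v m ⬝ᵥ M.mulVec w) / normM M w + Δ m with hc_def
  -- the first-order condition: c is constant
  have hc : ∀ i j : Fin k, ∀ ε : ℝ, 0 < ε → c i ≤ c j + ε := by
    intro i j ε hε
    set h : Fin d → ℝ := v j - v i with hh
    have hChM : 0 ≤ h ⬝ᵥ M.mulVec h := by
      rcases eq_or_ne h 0 with h0 | h0
      · simp [h0]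
      · exact (hposdef h h0).le
    set C : ℝ := (h ⬝ᵥ M.mulVec h) / (2 * normM M w) with hC_def
    have hC0 : 0 ≤ C := div_nonneg hChM (by linarith)
    set t : ℝ := min (α i) (ε / (C + 1)) with ht_def
    have ht0 : 0 < t := lt_min (hpos i) (div_pos hε (by linarith))
    have hti : t ≤ α i := min_le_left _ _
    have htC : t * C ≤ ε := by
      have h1 : t ≤ ε / (C + 1) := min_le_right _ _
      rw [le_div_iff₀ (by linarith)] at h1
      nlinarith
    set β : Fin k → ℝ := fun m => α m + (if m = j then t else 0) - (if m = i then t else 0)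
      with hβ_def
    have hβnn : ∀ m, 0 ≤ β m := by
      intro m
      by_cases h2 : m = i
      · subst h2; simp only [hβ_def]; split_ifs <;> linarith [hαnn m]
      · simp only [hβ_def, if_neg h2]; split_ifs <;> linarith [hαnn m]
    have hβsum : ∑ m, β m = 1 := by
      simp only [hβ_def, Finset.sum_sub_distrib, Finset.sum_add_distrib,
        Finset.sum_ite_eq', Finset.mem_univ, if_true, hαsum]
      ring
    have hβv : ∑ m, β m • v m = w + t • h := by
      simp only [hβ_def, sub_smul, add_smul, ite_smul, zero_smul,
        Finset.sum_sub_distrib, Finset.sum_add_distrib,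
        Finset.sum_ite_eq', Finset.mem_univ, if_true, hh, smul_sub, ← hw]
      abel
    have hβΔ : ∑ m, β m * Δ m = (∑ m, α m * Δ m) + t * Δ j - t * Δ i := by
      simp only [hβ_def, sub_mul, add_mul, ite_mul, zero_mul,
        Finset.sum_sub_distrib, Finset.sum_add_distrib,
        Finset.sum_ite_eq', Finset.mem_univ, if_true]
    set q : ℝ := h ⬝ᵥ M.mulVec w with hq_def
    set r : ℝ := h ⬝ᵥ M.mulVec h with hr_def
    have hquad : (w + t • h) ⬝ᵥ M.mulVec (w + t • h)
        = normM M w ^ 2 + (2 * t * q + t ^ 2 * r) := by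
      simp only [Matrix.mulVec_add, Matrix.mulVec_smul, add_dotProduct,
        dotProduct_add, smul_dotProduct, dotProduct_smul, smul_eq_mul]
      rw [hq_def, hr_def, hnw2, hMsymm w h]
      ring
    have hub : normM M (w + t • h)
        ≤ normM M w + (2 * t * q + t ^ 2 * r) / (2 * normM M w) := by
      have hnn : 0 ≤ normM M w ^ 2 + (2 * t * q + t ^ 2 * r) := by
        rw [← hquad]
        rcases eq_or_ne (w + t • h) 0 with h0 | h0
        · simp [h0]
        · exact (hposdef _ h0).le
      have := sqrt_aux (normM M w) (2 * t * q + t ^ 2 * r) hnw hnn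
      calc normM M (w + t • h)
          = Real.sqrt (normM M w ^ 2 + (2 * t * q + t ^ 2 * r)) := by rw [normM, hquad]
        _ ≤ _ := this
    have hmin' := hmin β ⟨hβnn, hβsum⟩
    rw [hβv, hβΔ] at hmin'
    have hexp : (2 * t * q + t ^ 2 * r) / (2 * normM M w)
        = t * (q / normM M w) + t * (t * C) := by
      rw [hC_def]
      field_simp
    have h2 : 0 ≤ t * (q / normM M w + (Δ j - Δ i) + t * C) := by
      have e : t * (q / normM M w + (Δ j - Δ i) + t * C)
          = (t * (q / normM M w) + t * (t * C)) + (t * Δ j - t * Δ i) := by ring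
      rw [e, ← hexp]
      linarith
    have h3 : 0 ≤ q / normM M w + (Δ j - Δ i) + t * C := by
      by_contra hcon
      push_neg at hcon
      exact absurd h2 (not_le.mpr (mul_neg_of_pos_of_neg ht0 hcon))
    have hq2 : q = v j ⬝ᵥ M.mulVec w - v i ⬝ᵥ M.mulVec w := by
      rw [hq_def, hh, sub_dotProduct]
    rw [hq2, sub_div] at h3
    simp only [hc_def]
    linarith
  have hceq : ∀ i j : Fin k, c i = c j := by
    have hle : ∀ i j : Fin k, c i ≤ c j := by
      intro i j
      by_contra hcon
      push_neg at hcon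
      have h4 := hc i j ((c i - c j) / 2)
        (by simp only [hc_def] at hcon ⊢; linarith)
      simp only [hc_def] at h4 hcon
      linarith
    exact fun i j => le_antisymm (hle i j) (hle j i)
  -- identify the constant with δ
  have hkey : ∀ i, c i = δ := by
    intro i
    have e2 : w ⬝ᵥ M.mulVec w = ∑ m, α m * (v m ⬝ᵥ M.mulVec w) := by
      rw [hw]; exact hbil α w
    have e1 : ∑ m, α m * c m
        = (∑ m, α m * (v m ⬝ᵥ M.mulVec w)) / normM M w + ∑ m, α m * Δ m := by
      rw [Finset.sum_div, ← Finset.sum_add_distrib]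
      refine Finset.sum_congr rfl fun m _ => ?_
      rw [hc_def]
      ring
    have ediv : w ⬝ᵥ M.mulVec w / normM M w = normM M w := by
      rw [← hnw2, pow_two, mul_div_assoc, div_self hnw.ne', mul_one]
    have h1 : ∑ m, α m * c m = δ := by
      rw [e1, ← e2, ediv, hδ]
    have h2 : ∑ m, α m * c m = c i := by
      calc ∑ m, α m * c m = ∑ m, α m * c i :=
            Finset.sum_congr rfl fun m _ => by rw [hceq m i]
        _ = (∑ m, α m) * c i := (Finset.sum_mul _ _ _).symm
        _ = c i := by rw [hαsum, one_mul]
    rw [← h2, h1]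
  have hMv : ∀ i, v i ⬝ᵥ M.mulVec w = normM M w * (δ - Δ i) := by
    intro i
    have h1 := hkey i
    simp only [hc_def] at h1
    have h2 : (v i ⬝ᵥ M.mulVec w) / normM M w = δ - Δ i := by linarith
    rw [div_eq_iff hnw.ne'] at h2
    rw [h2]; ring
  -- Gram matrix identities
  have hMhatα : ∀ i, Mhat.mulVec α i = v i ⬝ᵥ M.mulVec w := by
    intro i
    rw [hw, hbil2 (v i) α]
    simp only [hMhat, Matrix.mulVec, dotProduct, Matrix.of_apply]
    exact Finset.sum_congr rfl fun j _ => mul_comm _ _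
  have hαMα : α ⬝ᵥ Mhat.mulVec α = w ⬝ᵥ M.mulVec w := by
    simp only [dotProduct]
    rw [Finset.sum_congr rfl (fun m _ => by rw [hMhatα m])]
    rw [hw]
    exact (hbil α w).symm
  have hnormhat : normM Mhat α = normM M w := by
    rw [normM, normM, hαMα]
  -- second claim
  have hsecond : Mhat.mulVec α = normM Mhat α • (fun i => δ - Δ i) := by
    funext i
    rw [Pi.smul_apply, smul_eq_mul, hMhatα i, hMv i, hnormhat]
  refine ⟨?_, hsecond⟩
  -- Mhat is positive definite, hence invertible
  have hMhatx : ∀ (x : Fin k → ℝ) (i : Fin k),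
      Mhat.mulVec x i = v i ⬝ᵥ M.mulVec (∑ j, x j • v j) := by
    intro x i
    rw [hbil2 (v i) x]
    simp only [hMhat, Matrix.mulVec, dotProduct, Matrix.of_apply]
    exact Finset.sum_congr rfl fun j _ => mul_comm _ _
  have hgram : ∀ x : Fin k → ℝ,
      x ⬝ᵥ Mhat.mulVec x = (∑ i, x i • v i) ⬝ᵥ M.mulVec (∑ j, x j • v j) := by
    intro x
    calc x ⬝ᵥ Mhat.mulVec x = ∑ i, x i * Mhat.mulVec x i := rfl
      _ = ∑ i, x i * (v i ⬝ᵥ M.mulVec (∑ j, x j • v j)) :=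
          Finset.sum_congr rfl fun i _ => by rw [hMhatx x i]
      _ = (∑ i, x i • v i) ⬝ᵥ M.mulVec (∑ j, x j • v j) := (hbil x _).symm
  have hMhatherm : Mhat.IsHermitian := by
    rw [Matrix.IsHermitian]
    ext i j
    simp only [Matrix.conjTranspose_apply, hMhat, Matrix.of_apply, star_trivial]
    exact hMsymm (v j) (v i)
  have hMhatPD : Mhat.PosDef := by
    refine Matrix.PosDef.of_dotProduct_mulVec_pos hMhatherm fun x hx => ?_
    have hxv : (∑ i, x i • v i) ≠ 0 := by
      intro h0
      apply hx
      funext i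
      exact (Fintype.linearIndependent_iff.mp hind) x h0 i
    have := hposdef _ hxv
    simpa [hgram x] using this
  have hdet : IsUnit Mhat.det := hMhatPD.det_pos.ne'.isUnit
  have hinvmul : Mhat⁻¹.mulVec (Mhat.mulVec α) = α := by
    rw [Matrix.mulVec_mulVec, Matrix.nonsing_inv_mul _ hdet, Matrix.one_mulVec]
  have hy : (fun i => δ - Δ i) = (normM M w)⁻¹ • (Mhat.mulVec α) := by
    rw [hsecond, hnormhat, smul_smul, inv_mul_cancel₀ hnw.ne', one_smul]
  have hyval : (fun i => δ - Δ i) ⬝ᵥ Mhat⁻¹.mulVec (fun i => δ - Δ i) = 1 := by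
    rw [hy, Matrix.mulVec_smul, hinvmul, smul_dotProduct, dotProduct_smul,
      smul_eq_mul, smul_eq_mul, dotProduct_comm, hαMα, ← hnw2]
    field_simp
  rw [normM, hyval, Real.sqrt_one]


end
end

section
/- Consider the discrete eikonal setting: Ω := (ℝ/ℤ)^d, Ω_n := {0,1/n,…,(n−1)/n}^d, 𝓜 : Ω → S_d^+ continuous, and for each z ∈ Ω an 𝓜(z)-reduced mesh 𝒯(z). Assume (Limited extension): there is V_0 such that every vertex v of every mesh 𝒯(z), z ∈ Ω, satisfies ‖v‖ ≤ V_0; and (Consistency): there is r_0 > 0 such that for each z ∈ Ω there exists a basis (u_1,…,u_d) of ℤ^d with u_1,…,u_d,−u_1,…,−u_d vertices of 𝒯(z+w) for all w with ‖w‖ ≤ r_0. Let d_n : Ω_n → [0,∞] solve the discrete system. Then: (i) for any n ≥ 2, any z ∈ Ω_n and any nonzero vertex v of 𝒯(z), one has d_n(z) − d_n(z + v/n) ≤ ‖v‖_{𝓜(z)}/n; and (ii) for any n ≥ n_0 := d²V_0^d/r_0, any z ∈ Ω_n and any v ∈ {−1,0,1}^d, one has |d_n(z) − d_n(z + v/n)|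 ≤ Δ_0/n, where Δ_0 := d²V_0^d M_0 and M_0 := max{√(‖𝓜(z)‖) : z ∈ Ω}. -/
open Matrix
open scoped BigOperators ENNReal Classical

noncomputable section

namespace Stmt14Aux

lemma euclNorm_eq {d : ℕ} (u : Fin d → ℝ) :
    euclNorm u = ‖(WithLp.equiv 2 (∀ _ : Fin d, ℝ)).symm u‖ := by
  rw [EuclideanSpace.norm_eq]
  simp [euclNorm, dotProduct, Real.norm_eq_abs, sq_abs, pow_two]

lemma euclNorm_nonneg {d : ℕ} (u : Fin d → ℝ) : 0 ≤ euclNorm u := Real.sqrt_nonneg _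

lemma euclNorm_zero {d : ℕ} : euclNorm (0 : Fin d → ℝ) = 0 := by
  simp [euclNorm_eq]

lemma euclNorm_neg {d : ℕ} (u : Fin d → ℝ) : euclNorm (-u) = euclNorm u := by
  simp [euclNorm_eq]

lemma euclNorm_smul {d : ℕ} (c : ℝ) (u : Fin d → ℝ) :
    euclNorm (c • u) = |c| * euclNorm u := by
  simp [euclNorm_eq, norm_smul, Real.norm_eq_abs]

lemma euclNorm_sum_le {d : ℕ} {ι : Type*} (s : Finset ι) (f : ι → Fin d → ℝ) :
    euclNorm (∑ i ∈ s, f i) ≤ ∑ i ∈ s, euclNorm (f i) := by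
  simp only [euclNorm_eq]
  have : (WithLp.equiv 2 (∀ _ : Fin d, ℝ)).symm (∑ i ∈ s, f i)
      = ∑ i ∈ s, (WithLp.equiv 2 (∀ _ : Fin d, ℝ)).symm (f i) := WithLp.toLp_sum (p := 2) (s := s) (f := f)
  rw [this]
  exact norm_sum_le _ _

lemma abs_dotProduct_le {d : ℕ} (u w : Fin d → ℝ) :
    |u ⬝ᵥ w| ≤ euclNorm u * euclNorm w := by
  have := abs_real_inner_le_norm ((WithLp.equiv 2 (∀ _ : Fin d, ℝ)).symm u)
    ((WithLp.equiv 2 (∀ _ : Fin d, ℝ)).symm w)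
  rw [← euclNorm_eq, ← euclNorm_eq] at this
  simpa [dotProduct, PiLp.inner_apply, RCLike.inner_apply, mul_comm] using this

lemma normM_nonneg {d : ℕ} (M : Matrix (Fin d) (Fin d) ℝ) (u : Fin d → ℝ) :
    0 ≤ normM M u := Real.sqrt_nonneg _

lemma normM_smul {d : ℕ} (M : Matrix (Fin d) (Fin d) ℝ) {c : ℝ} (hc : 0 ≤ c)
    (u : Fin d → ℝ) : normM M (c • u) = c * normM M u := by
  have h1 : (c • u) ⬝ᵥ M.mulVec (c • u) = (c * c) * (u ⬝ᵥ M.mulVec u) := by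
    rw [Matrix.mulVec_smul, smul_dotProduct, dotProduct_smul]
    simp [smul_smul, mul_assoc]
  rw [normM, h1, Real.sqrt_mul (mul_nonneg hc hc), Real.sqrt_mul_self hc, normM]

lemma euclNorm_mulVec_le {d : ℕ} (M : Matrix (Fin d) (Fin d) ℝ) (w : Fin d → ℝ) :
    euclNorm (M.mulVec w) ≤ Real.sqrt (∑ i, euclNorm (M i) ^ 2) * euclNorm w := by
  have h1 : ∀ i, (M.mulVec w i) ^ 2 ≤ euclNorm (M i) ^ 2 * euclNorm w ^ 2 := by
    intro i
    have := abs_dotProduct_le (M i) w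
    have h2 : |M.mulVec w i| ≤ euclNorm (M i) * euclNorm w := this
    calc (M.mulVec w i) ^ 2 = |M.mulVec w i| ^ 2 := by rw [sq_abs]
    _ ≤ (euclNorm (M i) * euclNorm w) ^ 2 := by
        exact pow_le_pow_left₀ (abs_nonneg _) h2 2
    _ = euclNorm (M i) ^ 2 * euclNorm w ^ 2 := by ring
  have h3 : (M.mulVec w) ⬝ᵥ (M.mulVec w) ≤ (∑ i, euclNorm (M i) ^ 2) * (w ⬝ᵥ w) := by
    have hw : w ⬝ᵥ w = euclNorm w ^ 2 := by
      rw [euclNorm, Real.sq_sqrt]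
      exact Finset.sum_nonneg fun i _ => mul_self_nonneg _
    rw [hw, Finset.sum_mul]
    calc (M.mulVec w) ⬝ᵥ (M.mulVec w) = ∑ i, (M.mulVec w i) ^ 2 := by
          simp [dotProduct, pow_two]
    _ ≤ ∑ i, euclNorm (M i) ^ 2 * euclNorm w ^ 2 := Finset.sum_le_sum fun i _ => h1 i
  calc euclNorm (M.mulVec w) = Real.sqrt ((M.mulVec w) ⬝ᵥ (M.mulVec w)) := rfl
  _ ≤ Real.sqrt ((∑ i, euclNorm (M i) ^ 2) * (w ⬝ᵥ w)) := Real.sqrt_le_sqrt h3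
  _ = Real.sqrt (∑ i, euclNorm (M i) ^ 2) * euclNorm w := by
      rw [Real.sqrt_mul (Finset.sum_nonneg fun i _ => sq_nonneg _)]; rfl

lemma opNorm_nonneg {d : ℕ} (M : Matrix (Fin d) (Fin d) ℝ) : 0 ≤ opNorm M := by
  rcases Nat.eq_zero_or_pos d with hd | hd
  · subst hd
    have : {r : ℝ | ∃ u : Fin 0 → ℝ, euclNorm u = 1 ∧ r = euclNorm (M.mulVec u)} = ∅ := by
      ext r; simp only [Set.mem_setOf_eq, Set.mem_empty_iff_false, iff_false]
      rintro ⟨u, hu, -⟩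
      have : u = 0 := Subsingleton.elim _ _
      rw [this, euclNorm_zero] at hu; norm_num at hu
    rw [opNorm, this, Real.sSup_empty]
  · have i0 : Fin d := ⟨0, hd⟩
    have hmem : euclNorm (M.mulVec (Pi.single i0 1)) ∈
        {r : ℝ | ∃ u : Fin d → ℝ, euclNorm u = 1 ∧ r = euclNorm (M.mulVec u)} := by
      refine ⟨Pi.single i0 1, ?_, rfl⟩
      have : (Pi.single i0 1 : Fin d → ℝ) ⬝ᵥ Pi.single i0 1 = 1 := by
        simp [dotProduct, Pi.single_apply]
      rw [euclNorm, this, Real.sqrt_one]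
    have hbdd : BddAbove {r : ℝ | ∃ u : Fin d → ℝ, euclNorm u = 1 ∧ r = euclNorm (M.mulVec u)} := by
      refine ⟨Real.sqrt (∑ i, euclNorm (M i) ^ 2), ?_⟩
      rintro r ⟨u, hu, rfl⟩
      calc euclNorm (M.mulVec u) ≤ Real.sqrt (∑ i, euclNorm (M i) ^ 2) * euclNorm u :=
            euclNorm_mulVec_le M u
      _ = Real.sqrt (∑ i, euclNorm (M i) ^ 2) := by rw [hu, mul_one]
    exact le_trans (euclNorm_nonneg _) (le_csSup hbdd hmem)

lemma euclNorm_mulVec_le_opNorm {d : ℕ} (M : Matrix (Fin d) (Fin d) ℝ) (u : Fin d → ℝ) :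
    euclNorm (M.mulVec u) ≤ opNorm M * euclNorm u := by
  by_cases hu : u = 0
  · subst hu
    simp only [Matrix.mulVec_zero]
    rw [euclNorm_zero]
    simp [euclNorm_zero]
  · have hpos : 0 < euclNorm u := by
      rcases lt_or_eq_of_le (euclNorm_nonneg u) with h | h
      · exact h
      · exfalso; apply hu
        have h2 : u ⬝ᵥ u = 0 := by
          have h3 : Real.sqrt (u ⬝ᵥ u) = 0 := h.symm
          have h4 : u ⬝ᵥ u ≤ 0 := by
            by_contra hc
            push_neg at hc
            exact absurd h3 (ne_of_gt (Real.sqrt_pos.2 hc))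
          have h5 : 0 ≤ u ⬝ᵥ u := Finset.sum_nonneg fun i _ => mul_self_nonneg _
          linarith
        funext i
        have h5 : ∀ j ∈ Finset.univ, 0 ≤ u j * u j := fun j _ => mul_self_nonneg _
        have h6 := (Finset.sum_eq_zero_iff_of_nonneg h5).1 h2 i (Finset.mem_univ i)
        have : u i = 0 := by nlinarith [h6]
        simpa using this
    set c := (euclNorm u)⁻¹ with hc
    have hcpos : 0 < c := inv_pos.2 hpos
    have hunit : euclNorm (c • u) = 1 := by
      rw [euclNorm_smul, abs_of_pos hcpos, hc, inv_mul_cancel₀ (ne_of_gt hpos)]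
    have hbdd : BddAbove {r : ℝ | ∃ u : Fin d → ℝ, euclNorm u = 1 ∧ r = euclNorm (M.mulVec u)} := by
      refine ⟨Real.sqrt (∑ i, euclNorm (M i) ^ 2), ?_⟩
      rintro r ⟨w, hw, rfl⟩
      calc euclNorm (M.mulVec w) ≤ Real.sqrt (∑ i, euclNorm (M i) ^ 2) * euclNorm w :=
            euclNorm_mulVec_le M w
      _ = Real.sqrt (∑ i, euclNorm (M i) ^ 2) := by rw [hw, mul_one]
    have hle : euclNorm (M.mulVec (c • u)) ≤ opNorm M :=
      le_csSup hbdd ⟨c • u, hunit, rfl⟩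
    have heq : euclNorm (M.mulVec (c • u)) = c * euclNorm (M.mulVec u) := by
      rw [Matrix.mulVec_smul]
      have : (c • M.mulVec u) = c • M.mulVec u := rfl
      rw [show M.mulVec u = M.mulVec u from rfl]
      rw [show (c • M.mulVec u : Fin d → ℝ) = c • M.mulVec u from rfl]
      rw [euclNorm_smul, abs_of_pos hcpos]
    rw [heq] at hle
    have h7 := mul_le_mul_of_nonneg_right hle (le_of_lt hpos)
    have h8 : c * euclNorm (M.mulVec u) * euclNorm u = euclNorm (M.mulVec u) := by
      rw [hc]; field_simp
    rw [h8] at h7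
    exact h7

lemma normM_le_opNorm {d : ℕ} (M : Matrix (Fin d) (Fin d) ℝ) (u : Fin d → ℝ) :
    normM M u ≤ Real.sqrt (opNorm M) * euclNorm u := by
  have h1 : u ⬝ᵥ M.mulVec u ≤ opNorm M * euclNorm u ^ 2 := by
    calc u ⬝ᵥ M.mulVec u ≤ |u ⬝ᵥ M.mulVec u| := le_abs_self _
    _ ≤ euclNorm u * euclNorm (M.mulVec u) := abs_dotProduct_le _ _
    _ ≤ euclNorm u * (opNorm M * euclNorm u) :=
        mul_le_mul_of_nonneg_left (euclNorm_mulVec_le_opNorm M u) (euclNorm_nonneg _)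
    _ = opNorm M * euclNorm u ^ 2 := by ring
  calc normM M u = Real.sqrt (u ⬝ᵥ M.mulVec u) := rfl
  _ ≤ Real.sqrt (opNorm M * euclNorm u ^ 2) := Real.sqrt_le_sqrt h1
  _ = Real.sqrt (opNorm M) * euclNorm u := by
      rw [Real.sqrt_mul (opNorm_nonneg M), Real.sqrt_sq (euclNorm_nonneg u)]

lemma toTorus_add {d : ℕ} (x y : Fin d → ℝ) : toTorus (x + y) = toTorus x + toTorus y := by
  funext i
  simp [toTorus]

lemma toTorus_zero {d : ℕ} : toTorus (0 : Fin d → ℝ) = (0 : Torus d) := by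
  funext i
  simp [toTorus]

lemma grid_add {d n : ℕ} (hn : n ≠ 0) {z : Torus d} (hz : IsGridPoint n z)
    {w : Fin d → ℝ} (hw : IsIntVec w) : IsGridPoint n (z + toTorus ((n : ℝ)⁻¹ • w)) := by
  obtain ⟨k, hk⟩ := hz
  choose m hm using hw
  refine ⟨fun i => k i + m i, fun i => ?_⟩
  have hni : (n : ℝ) ≠ 0 := Nat.cast_ne_zero.2 hn
  have : ((n : ℝ)⁻¹ • w) i = (m i : ℝ) / n := by
    simp [hm i, div_eq_inv_mul]
  show z i + (((n : ℝ)⁻¹ • w) i : AddCircle (1:ℝ)) = _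
  rw [this, hk i]
  have : ((k i : ℝ) / n) + ((m i : ℝ) / n) = ((k i + m i : ℤ) : ℝ) / n := by
    push_cast
    field_simp
  rw [← this]
  rfl

lemma normM_smul' {d : ℕ} (M : Matrix (Fin d) (Fin d) ℝ) {c : ℝ} (hc : 0 ≤ c)
    (u : Fin d → ℝ) : normM M (c • u) = c * normM M u := by
  have h1 : (c • u) ⬝ᵥ M.mulVec (c • u) = (c * c) * (u ⬝ᵥ M.mulVec u) := by
    rw [Matrix.mulVec_smul, smul_dotProduct, dotProduct_smul]
    simp [smul_smul, mul_assoc]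
  rw [normM, h1, Real.sqrt_mul (mul_nonneg hc hc), Real.sqrt_mul_self hc, normM]

lemma step {d n : ℕ} {𝓜 : Torus d → Matrix (Fin d) (Fin d) ℝ}
    {𝒯 : Torus d → Finset (Finset (Fin d → ℝ))} {g : Torus d → ℝ≥0∞}
    (hg : SolvesDiscrete 𝓜 𝒯 n g) (hn : n ≠ 0)
    {z : Torus d} (hz : IsGridPoint n z) {V : Finset (Fin d → ℝ)} (hV : V ∈ 𝒯 z)
    {v : Fin d → ℝ} (hvV : v ∈ V) (hv0 : v ≠ 0) :
    g z ≤ g (z + toTorus ((n : ℝ)⁻¹ • v)) + ENNReal.ofReal (normM (𝓜 z) v / n) := by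
  by_cases hz0 : z = 0
  · rw [hz0, hg.1]
    exact zero_le
  rw [hg.2 z hz hz0]
  set α : (Fin d → ℝ) → ℝ := fun w => if w = v then 1 else 0 with hα
  have hα1 : ∀ w, 0 ≤ α w := by
    intro w; rw [hα]; dsimp only; split <;> norm_num
  have hα0 : α 0 = 0 := by
    rw [hα]; dsimp only; rw [if_neg (fun h => hv0 h.symm)]
  have hαsum : ∑ w ∈ V, α w = 1 := by
    rw [hα]; rw [Finset.sum_ite_eq' V v (fun _ => (1:ℝ))]
    rw [if_pos hvV]
  have key : hopfLax (𝓜 z) (𝒯 z) n g z ≤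
      ENNReal.ofReal (normM (𝓜 z) ((n : ℝ)⁻¹ • ∑ w ∈ V, α w • w)) +
        ∑ w ∈ V, ENNReal.ofReal (α w) * g (z + toTorus ((n : ℝ)⁻¹ • w)) := by
    refine iInf_le_of_le V (iInf_le_of_le hV (iInf_le_of_le α (iInf_le_of_le hα1
      (iInf_le_of_le hα0 (iInf_le_of_le hαsum le_rfl)))))
  have hsum1 : ∑ w ∈ V, α w • w = v := by
    rw [hα]
    have : ∀ w, (if w = v then (1:ℝ) else 0) • w = if w = v then w else 0 := by
      intro w; split <;> simp
    simp only [this]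
    rw [Finset.sum_ite_eq' V v (fun w => w), if_pos hvV]
  have hsum2 : ∑ w ∈ V, ENNReal.ofReal (α w) * g (z + toTorus ((n : ℝ)⁻¹ • w))
      = g (z + toTorus ((n : ℝ)⁻¹ • v)) := by
    rw [Finset.sum_eq_single_of_mem v hvV]
    · rw [hα]; simp
    · intro w hw hwv
      rw [hα]; dsimp only; rw [if_neg hwv]
      simp
  have hnorm : normM (𝓜 z) ((n : ℝ)⁻¹ • v) = normM (𝓜 z) v / n := by
    rw [normM_smul' _ (by positivity : (0:ℝ) ≤ (n:ℝ)⁻¹), inv_mul_eq_div]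
  rw [hsum1, hsum2, hnorm] at key
  calc hopfLax (𝓜 z) (𝒯 z) n g z ≤ _ := key
  _ = g (z + toTorus ((n : ℝ)⁻¹ • v)) + ENNReal.ofReal (normM (𝓜 z) v / n) := add_comm _ _

lemma hadamard {d : ℕ} (A : Fin d → Fin d → ℝ) :
    |(Matrix.of A).det| ≤ ∏ i, euclNorm (A i) := by
  rcases Nat.eq_zero_or_pos d with hd | hd
  · subst hd
    simp [Matrix.det_fin_zero]
  haveI : Fact (Module.finrank ℝ (EuclideanSpace ℝ (Fin d)) = d) :=
    ⟨finrank_euclideanSpace_fin⟩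
  set b : OrthonormalBasis (Fin d) ℝ (EuclideanSpace ℝ (Fin d)) :=
    EuclideanSpace.basisFun (Fin d) ℝ with hb
  haveI : Nonempty (Fin d) := ⟨⟨0, hd⟩⟩
  set o : Orientation ℝ (EuclideanSpace ℝ (Fin d)) (Fin d) := b.toBasis.orientation with ho
  set v : Fin d → EuclideanSpace ℝ (Fin d) :=
    fun i => (WithLp.equiv 2 (∀ _ : Fin d, ℝ)).symm (A i) with hv
  have h1 : |o.volumeForm v| ≤ ∏ i, ‖v i‖ := o.abs_volumeForm_apply_le v
  have h2 : |o.volumeForm v| = |b.toBasis.det v| := o.volumeForm_robust' b v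
  have h3 : b.toBasis.det v = (Matrix.of A).det := by
    rw [Module.Basis.det_apply]
    rw [← Matrix.det_transpose]
    rfl
  have h4 : ∀ i, ‖v i‖ = euclNorm (A i) := fun i => (euclNorm_eq (A i)).symm
  calc |(Matrix.of A).det| = |o.volumeForm v| := by rw [h2, h3]
  _ ≤ ∏ i, ‖v i‖ := h1
  _ = ∏ i, euclNorm (A i) := Finset.prod_congr rfl fun i _ => h4 i

lemma intvec_sum {d : ℕ} {u : Fin d → Fin d → ℝ} (hu : ∀ i, IsIntVec (u i)) (a : Fin d → ℤ) :
    IsIntVec (∑ i, ((a i : ℤ) : ℝ) • u i) := by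
  intro j
  choose M hM using hu
  refine ⟨∑ i, a i * M i j, ?_⟩
  rw [Finset.sum_apply]
  push_cast
  refine Finset.sum_congr rfl fun i _ => ?_
  rw [Pi.smul_apply, smul_eq_mul, hM i j]

lemma euclNorm_intcomb_le {d : ℕ} {u : Fin d → Fin d → ℝ} {V₀ : ℝ}
    (huV : ∀ i, euclNorm (u i) ≤ V₀) (hV₀0 : 0 ≤ V₀) (a : Fin d → ℤ) :
    euclNorm (∑ i, ((a i : ℤ) : ℝ) • u i) ≤ ((∑ i, (a i).natAbs : ℕ) : ℝ) * V₀ := by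
  calc euclNorm (∑ i, ((a i : ℤ) : ℝ) • u i) ≤ ∑ i, euclNorm (((a i : ℤ) : ℝ) • u i) :=
        euclNorm_sum_le _ _
  _ = ∑ i, |((a i : ℤ) : ℝ)| * euclNorm (u i) :=
        Finset.sum_congr rfl fun i _ => euclNorm_smul _ _
  _ ≤ ∑ i, |((a i : ℤ) : ℝ)| * V₀ :=
        Finset.sum_le_sum fun i _ => mul_le_mul_of_nonneg_left (huV i) (abs_nonneg _)
  _ = ((∑ i, (a i).natAbs : ℕ) : ℝ) * V₀ := by
        rw [← Finset.sum_mul]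
        congr 1
        push_cast [Nat.cast_natAbs]
        rfl

lemma walk {d n : ℕ} {𝓜 : Torus d → Matrix (Fin d) (Fin d) ℝ}
    {𝒯 : Torus d → Finset (Finset (Fin d → ℝ))} {g : Torus d → ℝ≥0∞}
    (hg : SolvesDiscrete 𝓜 𝒯 n g) (hn : n ≠ 0)
    {V₀ M₀ r₀ : ℝ} (hV₀0 : 0 ≤ V₀) (hM₀0 : 0 ≤ M₀)
    (hMnorm : ∀ z : Torus d, ∀ w : Fin d → ℝ, normM (𝓜 z) w ≤ M₀ * euclNorm w)
    {z : Torus d} (hz : IsGridPoint n z)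
    {u : Fin d → Fin d → ℝ} (huint : ∀ i, IsIntVec (u i)) (hu0 : ∀ i, u i ≠ (0 : Fin d → ℝ))
    (hucons : ∀ w : Fin d → ℝ, euclNorm w ≤ r₀ →
      ∀ i, IsMeshVertex (𝒯 (z + toTorus w)) (u i) ∧ IsMeshVertex (𝒯 (z + toTorus w)) (-(u i)))
    (huV : ∀ i, euclNorm (u i) ≤ V₀)
    (m : ℕ) :
    ∀ a b : Fin d → ℤ, ((∑ i, (a i).natAbs + ∑ i, (b i).natAbs : ℕ) : ℝ) * V₀ ≤ r₀ * n →
      (∑ i, (b i).natAbs) ≤ m →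
      g (z + toTorus ((n : ℝ)⁻¹ • ∑ i, ((a i : ℤ) : ℝ) • u i)) ≤
        g (z + toTorus ((n : ℝ)⁻¹ • ∑ i, ((a i + b i : ℤ) : ℝ) • u i))
          + m • ENNReal.ofReal (V₀ * M₀ / n) := by
  induction m with
  | zero =>
    intro a b hr hm
    have hb : ∀ i, b i = 0 := by
      intro i
      have h0 : ∑ i, (b i).natAbs = 0 := Nat.le_zero.1 hm
      have := Finset.sum_eq_zero_iff.1 h0 i (Finset.mem_univ i)
      omega
    have heq : ∑ i, ((a i + b i : ℤ) : ℝ) • u i = ∑ i, ((a i : ℤ) : ℝ) • u i :=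
      Finset.sum_congr rfl fun i _ => by rw [hb i, add_zero]
    rw [heq]
    simpa using le_self_add
  | succ m ih =>
    intro a b hr hm
    by_cases hb0 : ∀ i, b i = 0
    · have heq : ∑ i, ((a i + b i : ℤ) : ℝ) • u i = ∑ i, ((a i : ℤ) : ℝ) • u i :=
        Finset.sum_congr rfl fun i _ => by rw [hb0 i, add_zero]
      rw [heq]
      exact le_self_add
    push_neg at hb0
    obtain ⟨i₀, hi₀⟩ := hb0
    set σ : ℤ := if 0 < b i₀ then 1 else -1 with hσ
    set a' : Fin d → ℤ := Function.update a i₀ (a i₀ + σ) with ha'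
    set b' : Fin d → ℤ := Function.update b i₀ (b i₀ - σ) with hb'
    have habsb : (b i₀ - σ).natAbs = (b i₀).natAbs - 1 ∧ 1 ≤ (b i₀).natAbs := by
      rw [hσ]
      refine ⟨?_, by omega⟩
      split <;> omega
    have habsa : (a i₀ + σ).natAbs ≤ (a i₀).natAbs + 1 := by
      rw [hσ]; split <;> omega
    have hsa : ∑ i, (a i).natAbs = (a i₀).natAbs + ∑ i ∈ Finset.univ.erase i₀, (a i).natAbs :=
      (Finset.add_sum_erase _ _ (Finset.mem_univ i₀)).symm
    have hsb : ∑ i, (b i).natAbs = (b i₀).natAbs + ∑ i ∈ Finset.univ.erase i₀, (b i).natAbs :=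
      (Finset.add_sum_erase _ _ (Finset.mem_univ i₀)).symm
    have hsa' : ∑ i, (a' i).natAbs
        = (a i₀ + σ).natAbs + ∑ i ∈ Finset.univ.erase i₀, (a i).natAbs := by
      rw [ha', ← Finset.add_sum_erase _ _ (Finset.mem_univ i₀)]
      rw [Function.update_self]
      congr 1
      refine Finset.sum_congr rfl fun i hi => ?_
      rw [Function.update_of_ne (Finset.ne_of_mem_erase hi)]
    have hsb' : ∑ i, (b' i).natAbs
        = (b i₀ - σ).natAbs + ∑ i ∈ Finset.univ.erase i₀, (b i).natAbs := by
      rw [hb', ← Finset.add_sum_erase _ _ (Finset.mem_univ i₀)]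
      rw [Function.update_self]
      congr 1
      refine Finset.sum_congr rfl fun i hi => ?_
      rw [Function.update_of_ne (Finset.ne_of_mem_erase hi)]
    have hsum_le : ∑ i, (a' i).natAbs + ∑ i, (b' i).natAbs
        ≤ ∑ i, (a i).natAbs + ∑ i, (b i).natAbs := by
      rw [hsa', hsb', hsa, hsb]
      omega
    have hr' : ((∑ i, (a' i).natAbs + ∑ i, (b' i).natAbs : ℕ) : ℝ) * V₀ ≤ r₀ * n := by
      refine le_trans (mul_le_mul_of_nonneg_right ?_ hV₀0) hr
      exact_mod_cast hsum_le
    have hm' : ∑ i, (b' i).natAbs ≤ m := by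
      omega
    -- the current point
    set A : Fin d → ℝ := ∑ i, ((a i : ℤ) : ℝ) • u i with hA
    set w : Fin d → ℝ := (n : ℝ)⁻¹ • A with hw
    have hnpos : (0 : ℝ) < n := by
      have := Nat.pos_of_ne_zero hn
      exact_mod_cast this
    have hAnorm : euclNorm A ≤ r₀ * n := by
      refine le_trans (euclNorm_intcomb_le huV hV₀0 a) (le_trans ?_ hr)
      refine mul_le_mul_of_nonneg_right ?_ hV₀0
      exact_mod_cast Nat.le_add_right _ _
    have hwnorm : euclNorm w ≤ r₀ := by
      rw [hw, euclNorm_smul, abs_of_nonneg (by positivity : (0:ℝ) ≤ (n:ℝ)⁻¹)]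
      calc (n:ℝ)⁻¹ * euclNorm A ≤ (n:ℝ)⁻¹ * (r₀ * n) :=
            mul_le_mul_of_nonneg_left hAnorm (by positivity)
      _ = r₀ := by field_simp
    set v' : Fin d → ℝ := if 0 < b i₀ then u i₀ else -(u i₀) with hv'
    have hv'vert : IsMeshVertex (𝒯 (z + toTorus w)) v' := by
      rw [hv']
      rcases (hucons w hwnorm i₀) with ⟨h1, h2⟩
      split
      · exact h1
      · exact h2
    have hv'0 : v' ≠ 0 := by
      rw [hv']
      split
      · exact hu0 i₀
      · exact neg_ne_zero.2 (hu0 i₀)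
    obtain ⟨V, hV, hvV⟩ := hv'vert
    have hPgrid : IsGridPoint n (z + toTorus w) := grid_add hn hz (intvec_sum huint a)
    have hstep := step hg hn hPgrid hV hvV hv'0
    -- rewrite the target point of the step
    have hv'σ : v' = ((σ : ℤ) : ℝ) • u i₀ := by
      rw [hv', hσ]
      split
      · simp
      · simp
    have hA' : ∑ i, ((a' i : ℤ) : ℝ) • u i = A + ((σ : ℤ) : ℝ) • u i₀ := by
      rw [hA, ha']
      rw [← Finset.add_sum_erase _ (fun i => ((Function.update a i₀ (a i₀ + σ) i : ℤ) : ℝ) • u i)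
        (Finset.mem_univ i₀)]
      rw [← Finset.add_sum_erase _ (fun i => ((a i : ℤ) : ℝ) • u i) (Finset.mem_univ i₀)]
      rw [Function.update_self]
      have : ∑ i ∈ Finset.univ.erase i₀, ((Function.update a i₀ (a i₀ + σ) i : ℤ) : ℝ) • u i
          = ∑ i ∈ Finset.univ.erase i₀, ((a i : ℤ) : ℝ) • u i := by
        refine Finset.sum_congr rfl fun i hi => ?_
        rw [Function.update_of_ne (Finset.ne_of_mem_erase hi)]
      rw [this]
      push_cast
      rw [add_smul]
      abel
    have hpt : (z + toTorus w) + toTorus ((n : ℝ)⁻¹ • v')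
        = z + toTorus ((n : ℝ)⁻¹ • ∑ i, ((a' i : ℤ) : ℝ) • u i) := by
      rw [hA', smul_add, toTorus_add, hw, hv'σ]
      rw [add_assoc]
    rw [hpt] at hstep
    -- cost bound
    have hcost : ENNReal.ofReal (normM (𝓜 (z + toTorus w)) v' / n)
        ≤ ENNReal.ofReal (V₀ * M₀ / n) := by
      refine ENNReal.ofReal_le_ofReal ?_
      have h1 : euclNorm v' ≤ V₀ := by
        rw [hv']
        split
        · exact huV i₀
        · rw [euclNorm_neg]; exact huV i₀
      have h2 : normM (𝓜 (z + toTorus w)) v' ≤ M₀ * V₀ :=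
        le_trans (hMnorm _ v') (mul_le_mul_of_nonneg_left h1 hM₀0)
      rw [mul_comm V₀ M₀]
      gcongr
    -- IH at a', b'
    have hih := ih a' b' hr' hm'
    have ha'b' : ∑ i, ((a' i + b' i : ℤ) : ℝ) • u i = ∑ i, ((a i + b i : ℤ) : ℝ) • u i := by
      refine Finset.sum_congr rfl fun i _ => ?_
      congr 2
      by_cases h : i = i₀
      · subst h
        rw [ha', hb', Function.update_self, Function.update_self]
        ring
      · rw [ha', hb', Function.update_of_ne h, Function.update_of_ne h]
    rw [ha'b'] at hih
    calc g (z + toTorus ((n : ℝ)⁻¹ • A))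
        ≤ g (z + toTorus ((n : ℝ)⁻¹ • ∑ i, ((a' i : ℤ) : ℝ) • u i))
          + ENNReal.ofReal (normM (𝓜 (z + toTorus w)) v' / n) := hstep
    _ ≤ (g (z + toTorus ((n : ℝ)⁻¹ • ∑ i, ((a i + b i : ℤ) : ℝ) • u i))
          + m • ENNReal.ofReal (V₀ * M₀ / n)) + ENNReal.ofReal (V₀ * M₀ / n) :=
        add_le_add hih hcost
    _ = g (z + toTorus ((n : ℝ)⁻¹ • ∑ i, ((a i + b i : ℤ) : ℝ) • u i))
          + (m + 1) • ENNReal.ofReal (V₀ * M₀ / n) := by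
        rw [add_assoc, succ_nsmul]

end Stmt14Aux

open Stmt14Aux

/-- Lemma `lemmaTrueNeigh`: discrete Lipschitz estimates for a solution of the discrete
fixed point system, under the (Limited extension) and (Consistency) assumptions. -/
theorem stmt14 {d : ℕ}
    (𝓜 : Torus d → Matrix (Fin d) (Fin d) ℝ) (hcont : Continuous 𝓜)
    (hpd : ∀ z, (𝓜 z).PosDef)
    (𝒯 : Torus d → Finset (Finset (Fin d → ℝ)))
    (h𝒯 : ∀ z, IsReducedMesh (𝓜 z) (𝒯 z))
    (V₀ : ℝ)
    (hV₀ : ∀ z : Torus d, ∀ V ∈ 𝒯 z, ∀ v ∈ V, euclNorm v ≤ V₀)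
    (r₀ : ℝ) (hr₀ : 0 < r₀)
    (hcons : ∀ z : Torus d, ∃ u : Fin d → Fin d → ℝ,
      (∀ i, IsIntVec (u i)) ∧ |(Matrix.of u).det| = 1 ∧
      ∀ w : Fin d → ℝ, euclNorm w ≤ r₀ →
        ∀ i : Fin d, IsMeshVertex (𝒯 (z + toTorus w)) (u i) ∧
          IsMeshVertex (𝒯 (z + toTorus w)) (-(u i)))
    (M₀ : ℝ) (hM₀ : ∀ z : Torus d, Real.sqrt (opNorm (𝓜 z)) ≤ M₀)
    (n : ℕ) (hn : 2 ≤ n)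
    (g : Torus d → ℝ≥0∞) (hg : SolvesDiscrete 𝓜 𝒯 n g) :
    (∀ z : Torus d, IsGridPoint n z → ∀ V ∈ 𝒯 z, ∀ v ∈ V, v ≠ 0 →
      g z ≤ g (z + toTorus ((n : ℝ)⁻¹ • v)) + ENNReal.ofReal (normM (𝓜 z) v / n)) ∧
    ((d : ℝ) ^ 2 * V₀ ^ d / r₀ ≤ (n : ℝ) →
      ∀ z : Torus d, IsGridPoint n z → ∀ v : Fin d → ℝ,
        (∀ i, v i = -1 ∨ v i = 0 ∨ v i = 1) →
        g z ≤ g (z + toTorus ((n : ℝ)⁻¹ • v))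
          + ENNReal.ofReal ((d : ℝ) ^ 2 * V₀ ^ d * M₀ / n)) := by
  have hn0 : n ≠ 0 := by omega
  have hnpos : (0 : ℝ) < n := by
    have : 0 < n := by omega
    exact_mod_cast this
  constructor
  · intro z hz V hV v hvV hv0
    exact step hg hn0 hz hV hvV hv0
  intro hnbig z hz v hv
  -- basic nonnegativity facts
  have hV₀0 : 0 ≤ V₀ := by
    have h1 := (h𝒯 0).2.1
    have h2 : (0 : Fin d → ℝ) ∈ ⋃ V ∈ 𝒯 0, convexHull ℝ (V : Set (Fin d → ℝ)) :=
      mem_of_mem_nhds h1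
    obtain ⟨V, hV, -⟩ := Set.mem_iUnion₂.1 h2
    have h3 : (0 : Fin d → ℝ) ∈ V := (h𝒯 0).2.2.2.2.1 V hV
    have := hV₀ 0 V hV 0 h3
    rwa [euclNorm_zero] at this
  have hM₀0 : 0 ≤ M₀ := le_trans (Real.sqrt_nonneg _) (hM₀ 0)
  have hMnorm : ∀ z : Torus d, ∀ w : Fin d → ℝ, normM (𝓜 z) w ≤ M₀ * euclNorm w :=
    fun z w => le_trans (normM_le_opNorm _ w)
      (mul_le_mul_of_nonneg_right (hM₀ z) (euclNorm_nonneg _))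
  -- the consistency basis at z
  obtain ⟨u, huint, hudet, hucons⟩ := hcons z
  have huV : ∀ i, euclNorm (u i) ≤ V₀ := by
    intro i
    have h0 : euclNorm (0 : Fin d → ℝ) ≤ r₀ := by rw [euclNorm_zero]; exact le_of_lt hr₀
    obtain ⟨V, hV, hmem⟩ := (hucons 0 h0 i).1
    exact hV₀ _ V hV _ hmem
  have hu0 : ∀ i, u i ≠ (0 : Fin d → ℝ) := by
    intro i hi
    have : (Matrix.of u).det = 0 :=
      Matrix.det_eq_zero_of_row_eq_zero i (fun j => congrFun hi j)
    rw [this] at hudet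
    norm_num at hudet
  -- the integer matrix
  choose Uz hUz using huint
  have hcast : (Matrix.of u) = (Matrix.of Uz).map (Int.cast : ℤ → ℝ) := by
    ext i j
    simp [Matrix.map_apply, hUz i j]
  have hdetcast : ((Matrix.of Uz).det : ℝ) = (Matrix.of u).det := by
    rw [hcast]
    exact RingHom.map_det (Int.castRingHom ℝ) (Matrix.of Uz)
  have hdet1 : (Matrix.of Uz).det = 1 ∨ (Matrix.of Uz).det = -1 := by
    have h1 : |((Matrix.of Uz).det : ℝ)| = 1 := by rw [hdetcast]; exact hudet
    rw [← Int.cast_abs] at h1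
    have h2 : |(Matrix.of Uz).det| = 1 := by exact_mod_cast h1
    rcases abs_eq (by norm_num : (0:ℤ) ≤ 1) |>.1 h2 with h | h
    · exact Or.inl h
    · exact Or.inr h
  set e : ℤ := (Matrix.of Uz).det with he
  have hee : e * e = 1 := by rcases hdet1 with h | h <;> rw [← he] at * <;> rw [h] <;> ring
  -- the integer coordinates of v
  set vz : Fin d → ℤ := fun i => if v i = -1 then -1 else if v i = 1 then 1 else 0 with hvzdef
  have hvz : ∀ i, ((vz i : ℤ) : ℝ) = v i := by
    intro i
    rcases hv i with h | h | h <;> norm_num [hvzdef, h]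
  have hvzabs : ∀ i, (vz i) * (vz i) ≤ 1 := by
    intro i
    rw [hvzdef]
    dsimp only
    split
    · norm_num
    split
    · norm_num
    · norm_num
  set c : Fin d → ℤ := e • (Matrix.cramer (Matrix.of Uz)ᵀ) vz with hcdef
  have hsolve : (Matrix.of Uz)ᵀ.mulVec c = vz := by
    rw [hcdef, Matrix.mulVec_smul, Matrix.mulVec_cramer, Matrix.det_transpose, ← he,
      smul_smul, hee, one_smul]
  have hveq : v = ∑ i, ((c i : ℤ) : ℝ) • u i := by
    funext j
    rw [Finset.sum_apply]
    have h1 : ((vz j : ℤ) : ℝ) = v j := hvz j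
    rw [← h1, ← hsolve]
    rw [Matrix.mulVec, dotProduct]
    push_cast
    refine Finset.sum_congr rfl fun i _ => ?_
    rw [Pi.smul_apply, smul_eq_mul, Matrix.transpose_apply, Matrix.of_apply, ← hUz i j]
    ring
  -- bound on the coordinates via Hadamard's inequality
  have hvnorm : euclNorm v ≤ Real.sqrt d := by
    rw [euclNorm]
    refine Real.sqrt_le_sqrt ?_
    have h1 : v ⬝ᵥ v = ∑ i, v i * v i := rfl
    rw [h1]
    calc ∑ i, v i * v i ≤ ∑ _i : Fin d, (1 : ℝ) := by
          refine Finset.sum_le_sum fun i _ => ?_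
          have := hvzabs i
          have h2 : v i * v i = ((vz i * vz i : ℤ) : ℝ) := by
            rw [← hvz i]; push_cast; ring
          rw [h2]
          exact_mod_cast this
    _ = d := by simp
  have hcbound : ∀ i, ((c i).natAbs : ℝ) ≤ Real.sqrt d * V₀ ^ (d - 1) := by
    intro i
    have h1 : c i = e * ((Matrix.of Uz).updateRow i vz).det := by
      rw [hcdef]
      simp only [Pi.smul_apply, smul_eq_mul]
      rw [Matrix.cramer_transpose_apply]
    have h2 : |((c i : ℤ) : ℝ)| = |(((Matrix.of Uz).updateRow i vz).det : ℝ)| := by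
      rw [h1]
      push_cast
      rw [abs_mul]
      have : |(e : ℝ)| = 1 := by
        rcases hdet1 with h | h <;> rw [h] <;> norm_num
      rw [this, one_mul]
    -- realize the determinant over ℝ and apply Hadamard
    set Ar : Fin d → Fin d → ℝ := fun j => if j = i then v else u j with hAr
    have h3 : (((Matrix.of Uz).updateRow i vz).det : ℝ) = (Matrix.of Ar).det := by
      have hmap : (((Matrix.of Uz).updateRow i vz).det : ℝ)
          = (((Matrix.of Uz).updateRow i vz).map (Int.cast : ℤ → ℝ)).det :=
        RingHom.map_det (Int.castRingHom ℝ) ((Matrix.of Uz).updateRow i vz)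
      rw [hmap]
      congr 1
      ext j k
      by_cases hji : j = i
      · subst hji
        simp [Matrix.map_apply, Matrix.updateRow_self, hAr, hvz k]
      · simp [Matrix.map_apply, Matrix.updateRow_ne hji, hAr, hji, (hUz j k).symm]
    have h4 : |(Matrix.of Ar).det| ≤ ∏ j, euclNorm (Ar j) := hadamard Ar
    have h5 : ∏ j, euclNorm (Ar j) ≤ Real.sqrt d * V₀ ^ (d - 1) := by
      rw [← Finset.mul_prod_erase _ _ (Finset.mem_univ i)]
      have h6 : euclNorm (Ar i) ≤ Real.sqrt d := by
        rw [hAr]; simpa using hvnorm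
      have h7 : ∏ j ∈ Finset.univ.erase i, euclNorm (Ar j) ≤ V₀ ^ (d - 1) := by
        calc ∏ j ∈ Finset.univ.erase i, euclNorm (Ar j)
            ≤ ∏ _j ∈ Finset.univ.erase i, V₀ := by
              refine Finset.prod_le_prod (fun j _ => euclNorm_nonneg _) fun j hj => ?_
              rw [hAr]
              dsimp only
              rw [if_neg (Finset.ne_of_mem_erase hj)]
              exact huV j
        _ = V₀ ^ (d - 1) := by
              rw [Finset.prod_const]
              congr 1
              rw [Finset.card_erase_of_mem (Finset.mem_univ i)]
              simp
      calc euclNorm (Ar i) * ∏ j ∈ Finset.univ.erase i, euclNorm (Ar j)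
          ≤ Real.sqrt d * ∏ j ∈ Finset.univ.erase i, euclNorm (Ar j) :=
            mul_le_mul_of_nonneg_right h6
              (Finset.prod_nonneg fun j _ => euclNorm_nonneg _)
      _ ≤ Real.sqrt d * V₀ ^ (d - 1) :=
            mul_le_mul_of_nonneg_left h7 (Real.sqrt_nonneg _)
    calc ((c i).natAbs : ℝ) = |((c i : ℤ) : ℝ)| := by
          rw [Nat.cast_natAbs, Int.cast_abs]
    _ = |(((Matrix.of Uz).updateRow i vz).det : ℝ)| := h2
    _ = |(Matrix.of Ar).det| := by rw [h3]
    _ ≤ Real.sqrt d * V₀ ^ (d - 1) := le_trans h4 h5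
  -- total number of steps
  set m : ℕ := ∑ i, (c i).natAbs with hm
  have hmV : (m : ℝ) * V₀ ≤ (d : ℝ) ^ 2 * V₀ ^ d := by
    rcases Nat.eq_zero_or_pos d with hd | hd
    · subst hd
      have : m = 0 := by rw [hm]; simp
      rw [this]
      norm_num
    have h1 : (m : ℝ) ≤ (d : ℝ) * (Real.sqrt d * V₀ ^ (d - 1)) := by
      rw [hm]
      push_cast
      calc ∑ i, ((c i).natAbs : ℝ) ≤ ∑ _i : Fin d, Real.sqrt d * V₀ ^ (d - 1) :=
            Finset.sum_le_sum fun i _ => hcbound i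
      _ = (d : ℝ) * (Real.sqrt d * V₀ ^ (d - 1)) := by
            rw [Finset.sum_const]
            simp [mul_comm]
    have hsd : Real.sqrt d ≤ (d : ℝ) := by
      have h2 : (d : ℝ) ≤ (d : ℝ) ^ 2 := by
        have : (1 : ℝ) ≤ (d : ℝ) := by exact_mod_cast hd
        nlinarith
      calc Real.sqrt d ≤ Real.sqrt ((d : ℝ) ^ 2) := Real.sqrt_le_sqrt h2
      _ = (d : ℝ) := Real.sqrt_sq (by positivity)
    have hpow : V₀ ^ (d - 1) * V₀ = V₀ ^ d := by
      rw [← pow_succ]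
      congr 1
      omega
    calc (m : ℝ) * V₀ ≤ (d : ℝ) * (Real.sqrt d * V₀ ^ (d - 1)) * V₀ :=
          mul_le_mul_of_nonneg_right h1 hV₀0
    _ = (d : ℝ) * Real.sqrt d * (V₀ ^ (d - 1) * V₀) := by ring
    _ = (d : ℝ) * Real.sqrt d * V₀ ^ d := by rw [hpow]
    _ ≤ (d : ℝ) * (d : ℝ) * V₀ ^ d := by
          have hVd : (0:ℝ) ≤ V₀ ^ d := by positivity
          have := mul_le_mul_of_nonneg_left hsd (by positivity : (0:ℝ) ≤ (d:ℝ))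
          exact mul_le_mul_of_nonneg_right this hVd
    _ = (d : ℝ) ^ 2 * V₀ ^ d := by ring
  have hrn : (d : ℝ) ^ 2 * V₀ ^ d ≤ r₀ * n := by
    rw [div_le_iff₀ hr₀] at hnbig
    calc (d : ℝ) ^ 2 * V₀ ^ d ≤ (n : ℝ) * r₀ := hnbig
    _ = r₀ * n := mul_comm _ _
  -- apply the walk lemma with a = 0, b = c
  have huint' : ∀ i, IsIntVec (u i) := fun i j => ⟨Uz i j, hUz i j⟩
  have hwalk := walk hg hn0 hV₀0 hM₀0 hMnorm hz huint' hu0 hucons huV m 0 c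
    (by
      have h1 : ((∑ i, ((0:Fin d → ℤ) i).natAbs + ∑ i, (c i).natAbs : ℕ) : ℝ) = (m : ℝ) := by
        rw [hm]
        norm_num
      rw [h1]
      exact le_trans hmV hrn)
    (le_of_eq hm.symm)
  have hstart : (∑ i, (((0:Fin d → ℤ) i : ℤ) : ℝ) • u i) = (0 : Fin d → ℝ) := by
    simp
  have hend : (∑ i, (((0:Fin d → ℤ) i + c i : ℤ) : ℝ) • u i) = v := by
    rw [hveq]
    refine Finset.sum_congr rfl fun i _ => ?_
    norm_num
  rw [hstart, hend] at hwalk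
  have hzz : z + toTorus ((n : ℝ)⁻¹ • (0 : Fin d → ℝ)) = z := by
    rw [smul_zero, toTorus_zero, add_zero]
  rw [hzz] at hwalk
  refine le_trans hwalk (add_le_add le_rfl ?_)
  -- m • ofReal(V₀M₀/n) ≤ ofReal(d²V₀^d M₀ / n)
  have hx0 : 0 ≤ V₀ * M₀ / n := by positivity
  rw [← ENNReal.ofReal_nsmul]
  refine ENNReal.ofReal_le_ofReal ?_
  rw [nsmul_eq_mul]
  have h1 : (m : ℝ) * (V₀ * M₀ / n) = (m : ℝ) * V₀ * M₀ / n := by ring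
  rw [h1]
  have h2 : (m : ℝ) * V₀ * M₀ ≤ (d : ℝ) ^ 2 * V₀ ^ d * M₀ :=
    mul_le_mul_of_nonneg_right hmV hM₀0
  gcongr

end
end
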